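/- Let M be a transposed Poisson A-module over a transposed Poisson algebra A. If b ∈ A^A and m ∈ M^A, then b ⊳ m = 0 (the Lie action of b on m vanishes). -/
import Mathlib


open TensorProduct

/-- A transposed Poisson algebra structure on a commutative unital `k`-algebra `A`:
a Lie bracket satisfying the transposed Leibniz rule `2a{b,c} = {ab,c} + {b,ac}`. -/
structure TPA (k A : Type*) [Field k] [CharZero k] [CommRing A] [Algebra k A] where
  br : A →ₗ[k] A →ₗ[k] A
  skew : ∀ a b, br a b = - br b a
  jacobi : ∀ a b c, br a (br b c) = br (br a b) c + br b (br a c)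
  leibniz : ∀ a b c, 2 * a * br b c = br (a * b) c + br b (a * c)

/-- The transposed Poisson center `A^A = {b | b{a,a'} = {ba,a'} for all a,a'}`. -/
def TPA.center {k A : Type*} [Field k] [CharZero k] [CommRing A] [Algebra k A]
    (P : TPA k A) : Set A := {b | ∀ a a', b * P.br a a' = P.br (b * a) a'}

/-- A transposed Poisson `A`-module: an `A`-module action `sm` and a Lie `A`-module
action `lact` satisfying `2{a,b}·m = a⊳(b·m) − b⊳(a·m)` and
`2a·(b⊳m) = (ab)⊳m + b⊳(a·m)`. -/
structure TPMod (k A : Type*) [Field k] [CharZero k] [CommRing A] [Algebra k A]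
    (P : TPA k A) (M : Type*) [AddCommGroup M] [Module k M] where
  sm : A →ₗ[k] M →ₗ[k] M
  lact : A →ₗ[k] M →ₗ[k] M
  sm_one : ∀ m, sm 1 m = m
  sm_mul : ∀ a b m, sm (a * b) m = sm a (sm b m)
  lact_br : ∀ a b m, lact (P.br a b) m = lact a (lact b m) - lact b (lact a m)
  compat1 : ∀ a b m, 2 • sm (P.br a b) m = lact a (sm b m) - lact b (sm a m)
  compat2 : ∀ a b m, 2 • sm a (lact b m) = lact (a * b) m + lact b (sm a m)

theorem center_lact_invariant_eq_zero {k A : Type*} [Field k] [CharZero k]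
    [CommRing A] [Algebra k A] (P : TPA k A) {M : Type*} [AddCommGroup M]
    [Module k M] (Pm : TPMod k A P M) (b : A) (hb : b ∈ P.center) (m : M)
    (hm : ∀ a a' : A, Pm.sm (P.br a a') m = Pm.lact a (Pm.sm a' m)) :
    Pm.lact b m = 0 := by
  have h11 : P.br 1 1 = 0 := by
    have h := P.skew 1 1
    have h2 : (2 : k) • P.br 1 1 = 0 := by
      rw [two_smul]; linear_combination (norm := module) h
    simpa using (smul_eq_zero.mp h2).resolve_left (by norm_num)
  have hb1 : P.br b 1 = 0 := by
    have := hb 1 1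
    rw [h11, mul_one] at this
    simp [← this]
  have := hm b 1
  rw [hb1, Pm.sm_one] at this
  simpa using this.symm
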